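/- Discrete existence for the Poisson-Boltzmann equation: given a strictly positive discrete density ρ : M → ℝ with ρ_K > 0 for all K, there exists φ : M → ℝ solving -ε²(Δ_M φ)_K + e^{φ_K} = ρ_K for all K ∈ M with homogeneous discrete Neumann boundary conditions. -/

import Mathlib

/-- An abstract finite MAC mesh: primal cells, internal edges `σ = K|L` with the
two adjacent cells `left σ` and `right σ`, positive cell volumes `vol K = |K|`
and positive edge weights `w σ = |σ|²/|D_σ|`.  Boundary edges carry a
homogeneous discrete Neumann condition and hence do not contribute to the
discrete Laplacian; they are therefore omitted. -/
structure DiscMesh where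
  Cell : Type
  Edge : Type
  [cellFin : Fintype Cell]
  [edgeFin : Fintype Edge]
  [cellDec : DecidableEq Cell]
  left : Edge → Cell
  right : Edge → Cell
  edge_ne : ∀ σ, left σ ≠ right σ
  vol : Cell → ℝ
  w : Edge → ℝ
  vol_pos : ∀ K, 0 < vol K
  w_pos : ∀ σ, 0 < w σ

attribute [instance] DiscMesh.cellFin DiscMesh.edgeFin DiscMesh.cellDec

/-- The discrete Laplacian
`(Δ_M φ)_K = (1/|K|) Σ_{σ=K|L∈E(K)} (|σ|²/|D_σ|)(φ_L - φ_K)` with zero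
contribution from boundary edges (homogeneous discrete Neumann condition). -/
noncomputable def discLap (M : DiscMesh) (φ : M.Cell → ℝ) (K : M.Cell) : ℝ :=
  (1 / M.vol K) * ∑ σ : M.Edge,
    ((if M.left σ = K then M.w σ * (φ (M.right σ) - φ K) else 0)
      + (if M.right σ = K then M.w σ * (φ (M.left σ) - φ K) else 0))

set_option maxHeartbeats 1000000

/-- Scalar coercivity bound: `exp x - r x` dominates a positive multiple of
`|x|` minus a constant. -/
lemma PB_scalar_bound (r : ℝ) (hr : 0 < r) (x : ℝ) :
    min 1 r * |x| - max ((r + min 1 r) * (Real.log (r + min 1 r) - 1)) 0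
      ≤ Real.exp x - r * x := by
  set m := min 1 r with hm
  have hmpos : 0 < m := lt_min one_pos hr
  have hmr : m ≤ r := min_le_right _ _
  set s := r + m with hs
  have hspos : 0 < s := by positivity
  set C := max (s * (Real.log s - 1)) 0 with hC
  have hC0 : 0 ≤ C := le_max_right _ _
  have hC1 : s * (Real.log s - 1) ≤ C := le_max_left _ _
  rcases le_or_gt x 0 with hx | hx
  · rw [abs_of_nonpos hx]
    nlinarith [Real.exp_pos x]
  · rw [abs_of_pos hx]
    have h1 : x - Real.log s + 1 ≤ Real.exp (x - Real.log s) := by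
      linarith [Real.add_one_le_exp (x - Real.log s)]
    have h2 : Real.exp (x - Real.log s) * Real.exp (Real.log s) = Real.exp x := by
      rw [← Real.exp_add]; ring_nf
    have h3 : Real.exp (Real.log s) = s := Real.exp_log hspos
    nlinarith [Real.exp_pos (x - Real.log s)]

/-- The discrete Poisson–Boltzmann energy functional. -/
noncomputable def PBe (M : DiscMesh) (ε : ℝ) (ρ : M.Cell → ℝ) (φ : M.Cell → ℝ) : ℝ :=
  ε ^ 2 / 2 * ∑ σ : M.Edge, M.w σ * (φ (M.right σ) - φ (M.left σ)) ^ 2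
    + ∑ K : M.Cell, M.vol K * (Real.exp (φ K) - ρ K * φ K)

/-- The energy is coercive and continuous, hence has a global minimizer. -/
lemma PB_exists_min (M : DiscMesh) (ε : ℝ) (ρ : M.Cell → ℝ) (hρ : ∀ K, 0 < ρ K)
    [Nonempty M.Cell] : ∃ φ : M.Cell → ℝ, ∀ ψ, PBe M ε ρ φ ≤ PBe M ε ρ ψ := by
  classical
  have hcont : Continuous (PBe M ε ρ) := by unfold PBe; fun_prop
  set m : M.Cell → ℝ := fun K => min 1 (ρ K) with hm
  have hmpos : ∀ K, 0 < m K := fun K => lt_min one_pos (hρ K)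
  set Cc : M.Cell → ℝ := fun K =>
    max ((ρ K + m K) * (Real.log (ρ K + m K) - 1)) 0 with hCc
  set b : ℝ := Finset.univ.inf' Finset.univ_nonempty (fun K => M.vol K * m K) with hb
  have hbpos : 0 < b := by
    rw [hb, Finset.lt_inf'_iff]
    exact fun K _ => mul_pos (M.vol_pos K) (hmpos K)
  set C' : ℝ := ∑ K : M.Cell, M.vol K * Cc K with hC'
  have hlow : ∀ φ : M.Cell → ℝ, b * ‖φ‖ - C' ≤ PBe M ε ρ φ := by
    intro φ
    have hnorm : ‖φ‖ ≤ ∑ K : M.Cell, |φ K| := by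
      rw [pi_norm_le_iff_of_nonneg (Finset.sum_nonneg fun K _ => abs_nonneg _)]
      intro i
      rw [Real.norm_eq_abs]
      exact Finset.single_le_sum (f := fun K => |φ K|) (fun j _ => abs_nonneg _)
        (Finset.mem_univ i)
    have h1 : b * ‖φ‖ ≤ ∑ K : M.Cell, M.vol K * m K * |φ K| := by
      calc b * ‖φ‖ ≤ b * ∑ K : M.Cell, |φ K| :=
            mul_le_mul_of_nonneg_left hnorm hbpos.le
        _ = ∑ K : M.Cell, b * |φ K| := Finset.mul_sum _ _ _
        _ ≤ ∑ K : M.Cell, M.vol K * m K * |φ K| :=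
            Finset.sum_le_sum fun K _ => mul_le_mul_of_nonneg_right
              (Finset.inf'_le _ (Finset.mem_univ K)) (abs_nonneg _)
    have h2 : ∀ K, M.vol K * m K * |φ K| - M.vol K * Cc K
        ≤ M.vol K * (Real.exp (φ K) - ρ K * φ K) := by
      intro K
      have := PB_scalar_bound (ρ K) (hρ K) (φ K)
      have hv := (M.vol_pos K).le
      nlinarith [this]
    have h3 : ∑ K : M.Cell, (M.vol K * m K * |φ K| - M.vol K * Cc K)
        ≤ ∑ K : M.Cell, M.vol K * (Real.exp (φ K) - ρ K * φ K) :=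
      Finset.sum_le_sum fun K _ => h2 K
    rw [Finset.sum_sub_distrib] at h3
    have h4 : 0 ≤ ε ^ 2 / 2 * ∑ σ : M.Edge, M.w σ * (φ (M.right σ) - φ (M.left σ)) ^ 2 := by
      apply mul_nonneg (by positivity)
      exact Finset.sum_nonneg fun σ _ => mul_nonneg (M.w_pos σ).le (sq_nonneg _)
    unfold PBe
    linarith
  have hcoer : Filter.Tendsto (PBe M ε ρ) (Filter.cocompact _) Filter.atTop := by
    have h1 : Filter.Tendsto (fun φ : M.Cell → ℝ => b * ‖φ‖ - C')
        (Filter.cocompact _) Filter.atTop := by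
      have := tendsto_norm_cocompact_atTop (E := M.Cell → ℝ)
      have h2 := this.const_mul_atTop hbpos
      simpa [sub_eq_add_neg] using Filter.tendsto_atTop_add_const_right _ (-C') h2
    exact Filter.tendsto_atTop_mono hlow h1
  exact hcont.exists_forall_le hcoer

/-- Euler–Lagrange equation: a minimizer of the energy solves the discrete
Poisson–Boltzmann equation. -/
lemma PB_euler_lagrange (M : DiscMesh) (ε : ℝ) (ρ : M.Cell → ℝ)
    (φ : M.Cell → ℝ) (hmin : ∀ ψ, PBe M ε ρ φ ≤ PBe M ε ρ ψ) (K : M.Cell) :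
    -ε ^ 2 * discLap M φ K + Real.exp (φ K) = ρ K := by
  classical
  set e : M.Cell → ℝ := fun L => if L = K then 1 else 0 with he
  have hlin : ∀ L : M.Cell, HasDerivAt (fun t : ℝ => φ L + t * e L) (e L) 0 := by
    intro L
    simpa using ((hasDerivAt_id (0 : ℝ)).mul_const (e L)).const_add (φ L)
  set g : ℝ → ℝ := fun t => PBe M ε ρ (fun L => φ L + t * e L) with hg
  have hloc : IsLocalMin g 0 := by
    apply Filter.Eventually.of_forall
    intro t
    have h0 : g 0 = PBe M ε ρ φ := by
      have h' : (fun L => φ L + (0:ℝ) * e L) = φ := by funext L; simp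
      simp only [hg, h']
    rw [h0]
    exact hmin _
  have hE : ∀ σ : M.Edge, HasDerivAt
      (fun t : ℝ => M.w σ * ((φ (M.right σ) + t * e (M.right σ))
        - (φ (M.left σ) + t * e (M.left σ))) ^ 2)
      (M.w σ * (2 * (φ (M.right σ) - φ (M.left σ)) * (e (M.right σ) - e (M.left σ)))) 0 := by
    intro σ
    have h1 := (hlin (M.right σ)).fun_sub (hlin (M.left σ))
    have h2 := (h1.fun_pow 2).const_mul (M.w σ)
    refine h2.congr_deriv ?_
    simp
  have hC : ∀ K' : M.Cell, HasDerivAt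
      (fun t : ℝ => M.vol K' * (Real.exp (φ K' + t * e K') - ρ K' * (φ K' + t * e K')))
      (M.vol K' * (e K' * Real.exp (φ K') - ρ K' * e K')) 0 := by
    intro K'
    have h1 := hlin K'
    have h2 := ((h1.exp).fun_sub (h1.const_mul (ρ K'))).const_mul (M.vol K')
    refine h2.congr_deriv ?_
    simp only [zero_mul, add_zero]
    ring
  have hder : HasDerivAt g
      (ε ^ 2 / 2 * ∑ σ : M.Edge,
          M.w σ * (2 * (φ (M.right σ) - φ (M.left σ)) * (e (M.right σ) - e (M.left σ)))
        + ∑ K' : M.Cell, M.vol K' * (e K' * Real.exp (φ K') - ρ K' * e K')) 0 := by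
    rw [hg]
    unfold PBe
    exact ((HasDerivAt.fun_sum fun σ _ => hE σ).const_mul (ε ^ 2 / 2)).add
      (HasDerivAt.fun_sum fun K' _ => hC K')
  have hzero := hloc.hasDerivAt_eq_zero hder
  set S : ℝ := ∑ σ : M.Edge,
    ((if M.left σ = K then M.w σ * (φ (M.right σ) - φ K) else 0)
      + (if M.right σ = K then M.w σ * (φ (M.left σ) - φ K) else 0)) with hS
  have claim1 : ∑ σ : M.Edge,
      M.w σ * (2 * (φ (M.right σ) - φ (M.left σ)) * (e (M.right σ) - e (M.left σ)))
      = -2 * S := by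
    rw [hS, Finset.mul_sum]
    refine Finset.sum_congr rfl fun σ _ => ?_
    rw [he]
    by_cases hL : M.left σ = K <;> by_cases hR : M.right σ = K
    · exact absurd (hL.trans hR.symm) (M.edge_ne σ)
    · simp only [if_pos hL, if_neg hR]
      rw [hL]; ring
    · simp only [if_neg hL, if_pos hR]
      rw [hR]; ring
    · simp [hL, hR]
  have claim2 : ∑ K' : M.Cell, M.vol K' * (e K' * Real.exp (φ K') - ρ K' * e K')
      = M.vol K * (Real.exp (φ K) - ρ K) := by
    rw [he]
    have h : ∀ K' : M.Cell, M.vol K' * ((if K' = K then (1:ℝ) else 0) * Real.exp (φ K')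
        - ρ K' * (if K' = K then (1:ℝ) else 0))
        = if K' = K then M.vol K' * (Real.exp (φ K') - ρ K') else 0 := by
      intro K'; split <;> ring
    simp only [h]
    simp
  rw [claim1, claim2] at hzero
  rw [discLap, ← hS]
  have hv : M.vol K ≠ 0 := (M.vol_pos K).ne'
  field_simp
  nlinarith [hzero]

/-- Existence of a solution of the discrete Poisson–Boltzmann equation for a
strictly positive discrete density. -/
theorem discrete_PB_existence (M : DiscMesh) (ε : ℝ) (hε : 0 < ε)
    (ρ : M.Cell → ℝ) (hρ : ∀ K, 0 < ρ K) :
    ∃ φ : M.Cell → ℝ, ∀ K, -ε ^ 2 * discLap M φ K + Real.exp (φ K) = ρ K := by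
  cases isEmpty_or_nonempty M.Cell with
  | inl h => exact ⟨0, fun K => isEmptyElim K⟩
  | inr h =>
    obtain ⟨φ, hmin⟩ := PB_exists_min M ε ρ hρ
    exact ⟨φ, fun K => PB_euler_lagrange M ε ρ φ hmin K⟩
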